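/- Balance of gaps around a critical point: let N≥2, x ∈ ℝ^N_<, set P(λ)=∏_{k=1}^N(λ−x_k), let j∈{1,…,N−1} and let ζ be the unique zero of P′ lying in the open interval (x_j, x_{j+1}). Then (1/N)·|x_j − ζ| ≤ |x_{j+1} − ζ| ≤ N·|x_j − ζ|. -/

import Mathlib

/-- The monic polynomial `P(λ) = ∏_k (λ − x_k)`, as a function. -/
noncomputable def Pprod {N : ℕ} (x : Fin N → ℝ) (t : ℝ) : ℝ := ∏ k, (t - x k)

def inclL {N : ℕ} (j : Fin (N - 1)) : Fin N := ⟨j.1, lt_of_lt_of_le j.2 (Nat.sub_le N 1)⟩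
def inclR {N : ℕ} (j : Fin (N - 1)) : Fin N := ⟨j.1 + 1, by have := j.2; omega⟩

/-- **Balance of gaps around a critical point**:
`(1/N)|x_j − ζ| ≤ |x_{j+1} − ζ| ≤ N |x_j − ζ|` for the unique zero `ζ` of `P′` in
`(x_j, x_{j+1})`. -/
theorem gap_balance (N : ℕ) (hN : 2 ≤ N) (x : Fin N → ℝ) (hx : StrictMono x)
    (j : Fin (N - 1)) (zeta : ℝ)
    (hmem : zeta ∈ Set.Ioo (x (inclL j)) (x (inclR j)))
    (hcrit : deriv (Pprod x) zeta = 0) :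
    (1 / N : ℝ) * |x (inclL j) - zeta| ≤ |x (inclR j) - zeta| ∧
    |x (inclR j) - zeta| ≤ (N : ℝ) * |x (inclL j) - zeta| := by
  obtain ⟨hL, hR⟩ := hmem
  set a : ℝ := zeta - x (inclL j) with ha_def
  set b : ℝ := x (inclR j) - zeta with hb_def
  have ha : 0 < a := by simp [ha_def]; linarith
  have hb : 0 < b := by simp [hb_def]; linarith
  -- every point is on one side
  have hside : ∀ k : Fin N, x k ≤ x (inclL j) ∨ x (inclR j) ≤ x k := by
    intro k
    rcases le_or_gt k.1 j.1 with h | h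
    · left; exact hx.monotone (by exact h)
    · right; exact hx.monotone (by simpa [inclR, Fin.le_def] using h)
  have hne : ∀ k : Fin N, zeta - x k ≠ 0 := by
    intro k
    rcases hside k with h | h
    · have : 0 < zeta - x k := by linarith
      linarith
    · have : zeta - x k < 0 := by linarith
      linarith
  -- compute the derivative
  have hderiv : deriv (Pprod x) zeta
      = ∑ k, (∏ i ∈ Finset.univ.erase k, (zeta - x i)) := by
    have h := deriv_finset_prod (𝕜 := ℝ) (u := (Finset.univ : Finset (Fin N)))
      (f := fun (k : Fin N) (t : ℝ) => t - x k) (x := zeta)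
      (fun i _ => (differentiable_id.sub_const (x i)).differentiableAt)
    rw [show Pprod x = ∏ i, fun t => t - x i from by funext t; simp [Pprod, Finset.prod_apply]]
    simpa [deriv_sub_const] using h
  have hProdne : (∏ i, (zeta - x i)) ≠ 0 := Finset.prod_ne_zero_iff.2 fun i _ => hne i
  -- sum of inverses vanishes
  have hsum : ∑ k, (zeta - x k)⁻¹ = 0 := by
    have hfac : ∀ k : Fin N, (∏ i ∈ Finset.univ.erase k, (zeta - x i))
        = (∏ i, (zeta - x i)) * (zeta - x k)⁻¹ := by
      intro k
      rw [← Finset.mul_prod_erase Finset.univ _ (Finset.mem_univ k),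
        mul_comm (zeta - x k), mul_assoc, mul_inv_cancel₀ (hne k), mul_one]
    have : (∏ i, (zeta - x i)) * (∑ k, (zeta - x k)⁻¹) = 0 := by
      rw [Finset.mul_sum]
      rw [hderiv] at hcrit
      rw [← hcrit]
      exact Finset.sum_congr rfl fun k _ => (hfac k).symm
    exact (mul_eq_zero.1 this).resolve_left hProdne
  -- termwise bounds
  have hub : ∀ k : Fin N, (zeta - x k)⁻¹ ≤ a⁻¹ := by
    intro k
    rcases hside k with h | h
    · have h1 : a ≤ zeta - x k := by simp [ha_def]; linarith
      exact inv_anti₀ ha h1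
    · have h1 : zeta - x k < 0 := by linarith
      have h2 := inv_lt_zero.2 h1
      have := inv_pos.2 ha
      linarith
  have hlb : ∀ k : Fin N, -(zeta - x k)⁻¹ ≤ b⁻¹ := by
    intro k
    rcases hside k with h | h
    · have h1 : 0 < zeta - x k := by linarith
      have := inv_pos.2 h1
      have := inv_pos.2 hb
      linarith
    · have h1 : x k - zeta ≥ b := by simp [hb_def]; linarith
      have h2 : (x k - zeta)⁻¹ ≤ b⁻¹ := inv_anti₀ hb h1
      have h3 : -(zeta - x k)⁻¹ = (x k - zeta)⁻¹ := by
        rw [← inv_neg]; ring_nf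
      linarith [h3 ▸ h2]
  have hLR : inclL j ≠ inclR j := by
    intro h
    rw [Fin.ext_iff] at h
    simp only [inclL, inclR] at h
    omega
  have hcard : ((Finset.univ : Finset (Fin N)).erase (inclR j)).card = N - 1 := by
    simp [Finset.card_erase_of_mem]
  have hcard2 : ((Finset.univ : Finset (Fin N)).erase (inclL j)).card = N - 1 := by
    simp [Finset.card_erase_of_mem]
  have hvalR : (zeta - x (inclR j))⁻¹ = -b⁻¹ := by
    rw [show zeta - x (inclR j) = -b by rw [hb_def]; ring, inv_neg]
  have hvalL : (zeta - x (inclL j))⁻¹ = a⁻¹ := by rw [show zeta - x (inclL j) = a from rfl]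
  -- bound b⁻¹ ≤ (N-1) a⁻¹
  have key1 : b⁻¹ ≤ (N - 1 : ℝ) * a⁻¹ := by
    have hsplit : ∑ k ∈ Finset.univ.erase (inclR j), (zeta - x k)⁻¹ = b⁻¹ := by
      have := Finset.add_sum_erase Finset.univ (fun k => (zeta - x k)⁻¹)
        (Finset.mem_univ (inclR j))
      simp only [hsum, hvalR] at this
      linarith
    have hbnd := Finset.sum_le_card_nsmul (Finset.univ.erase (inclR j))
      (fun k => (zeta - x k)⁻¹) a⁻¹ (fun k _ => hub k)
    rw [hsplit, hcard, nsmul_eq_mul] at hbnd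
    calc b⁻¹ ≤ ((N - 1 : ℕ) : ℝ) * a⁻¹ := hbnd
      _ = (N - 1 : ℝ) * a⁻¹ := by
          congr 1
          exact_mod_cast Nat.cast_sub (by omega)
  have key2 : a⁻¹ ≤ (N - 1 : ℝ) * b⁻¹ := by
    have hsplit : ∑ k ∈ Finset.univ.erase (inclL j), (-(zeta - x k)⁻¹) = a⁻¹ := by
      have := Finset.add_sum_erase Finset.univ (fun k => (zeta - x k)⁻¹)
        (Finset.mem_univ (inclL j))
      simp only [hsum, hvalL] at this
      rw [Finset.sum_neg_distrib]
      linarith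
    have hbnd := Finset.sum_le_card_nsmul (Finset.univ.erase (inclL j))
      (fun k => -(zeta - x k)⁻¹) b⁻¹ (fun k _ => hlb k)
    rw [hsplit, hcard2, nsmul_eq_mul] at hbnd
    calc a⁻¹ ≤ ((N - 1 : ℕ) : ℝ) * b⁻¹ := hbnd
      _ = (N - 1 : ℝ) * b⁻¹ := by
          congr 1
          exact_mod_cast Nat.cast_sub (by omega)
  have hN' : (2 : ℝ) ≤ N := by exact_mod_cast hN
  have habs1 : |x (inclL j) - zeta| = a := by rw [abs_of_neg (by linarith)]; ring
  have habs2 : |x (inclR j) - zeta| = b := by rw [abs_of_pos (by linarith)]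
  rw [habs1, habs2]
  have hainv := inv_pos.2 ha
  have hbinv := inv_pos.2 hb
  constructor
  · -- (1/N) a ≤ b  from b⁻¹ ≤ (N-1) a⁻¹
    rw [div_mul_eq_mul_div, one_mul, div_le_iff₀ (by linarith)]
    nlinarith [mul_inv_cancel₀ (ne_of_gt ha), mul_inv_cancel₀ (ne_of_gt hb)]
  · nlinarith [mul_inv_cancel₀ (ne_of_gt ha), mul_inv_cancel₀ (ne_of_gt hb)]
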